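/- Let M be a ℤ[u]-module carrying an additive endomorphism Γ satisfying Γ(f·x) = f·Γ(x) + 2u²·(∂_u f)·x for all f ∈ ℤ[u], x ∈ M. Let p be an odd prime and λ, d positive integers both coprime to p. Then M cannot contain a direct summand isomorphic to (ℤ/p)[u]/((u−λ)^d). -/

import Mathlib

open Polynomial

/-- The `ℤ[u]`-module `(ℤ/p)[u]/((u - λ)^d)`, with the `ℤ[u]`-action coming from
the ring homomorphism `ℤ[u] → (ℤ/p)[u] → (ℤ/p)[u]/((u-λ)^d)`. -/
abbrev modpQuot (p : ℕ) (lam : ℤ) (d : ℕ) : Type :=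
  Polynomial (ZMod p) ⧸ Ideal.span {((X - C ((lam : ℤ) : ZMod p)) ^ d : Polynomial (ZMod p))}

noncomputable instance (p : ℕ) (lam : ℤ) (d : ℕ) :
    Module (Polynomial ℤ) (modpQuot p lam d) :=
  Module.compHom (modpQuot p lam d)
    (((Ideal.Quotient.mk (Ideal.span {((X - C ((lam : ℤ) : ZMod p)) ^ d : Polynomial (ZMod p))})).comp
      (Polynomial.mapRingHom (Int.castRingHom (ZMod p)))) : Polynomial ℤ →+* modpQuot p lam d)

/-- If a `ℤ[u]`-module `M` carries an additive endomorphism `Γ` satisfying the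
connection-type Leibniz rule `Γ(f • x) = f • Γ(x) + (2u² ∂_u f) • x`, and `p` is
an odd prime while `λ, d` are positive integers coprime to `p`, then `M` has no
direct summand isomorphic to `(ℤ/p)[u]/((u - λ)^d)`. -/
theorem no_modp_torsion_summand
    (M : Type*) [AddCommGroup M] [Module (Polynomial ℤ) M]
    (Γ : M → M)
    (hadd : ∀ x y : M, Γ (x + y) = Γ x + Γ y)
    (hleib : ∀ (f : Polynomial ℤ) (x : M),
      Γ (f • x) = f • Γ x + (2 * X ^ 2 * derivative f) • x)
    (p : ℕ) (hp : p.Prime) (hodd : p ≠ 2)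
    (lam d : ℕ) (hlam : 0 < lam) (hd : 0 < d)
    (hlamp : Nat.Coprime lam p) (hdp : Nat.Coprime d p) :
    ¬ ∃ (N N' : Submodule (Polynomial ℤ) M), IsCompl N N' ∧
        Nonempty (N ≃ₗ[Polynomial ℤ] modpQuot p (lam : ℤ) d) := by
  haveI : Fact p.Prime := ⟨hp⟩
  rintro ⟨N, N', hcompl, ⟨e⟩⟩
  set lz : ZMod p := (((lam : ℕ) : ℤ) : ZMod p) with hlzdef
  set q : Polynomial (ZMod p) := X - C lz with hqdef
  set I : Ideal (Polynomial (ZMod p)) := Ideal.span {q ^ d} with hIdef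
  -- smul description
  have hsmul : ∀ (f : Polynomial ℤ) (y : modpQuot p (lam : ℤ) d),
      f • y = (Ideal.Quotient.mk I (f.map (Int.castRingHom (ZMod p)))) * y := fun f y => rfl
  set f : Polynomial ℤ := (X - C ((lam : ℕ) : ℤ)) ^ d with hfdef
  have hmapf : f.map (Int.castRingHom (ZMod p)) = q ^ d := by
    simp [hfdef, hqdef, Polynomial.map_pow, Polynomial.map_sub, hlzdef]
  -- f kills everything in Q
  have hfkill : ∀ y : modpQuot p (lam : ℤ) d, f • y = 0 := by
    intro y
    rw [hsmul, hmapf]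
    have : (Ideal.Quotient.mk I) (q ^ d) = 0 :=
      Ideal.Quotient.eq_zero_iff_mem.2 (Ideal.subset_span rfl)
    rw [this, zero_mul]
  set x : N := e.symm 1 with hxdef
  have hfx : f • x = 0 := by
    apply e.injective
    rw [map_smul, map_zero, hfkill]
  have hfx0 : f • (x : M) = 0 := by
    rw [← Submodule.coe_smul, hfx, Submodule.coe_zero]
  have hΓ0 : Γ 0 = 0 := by
    have h := hadd 0 0
    rw [add_zero] at h
    exact right_eq_add.mp h
  have hkey : (0 : M) = f • Γ (x : M) + (2 * X ^ 2 * derivative f) • (x : M) := by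
    rw [← hleib, hfx0, hΓ0]
  set π : M →ₗ[Polynomial ℤ] N := N.linearProjOfIsCompl N' hcompl with hπdef
  have hπx : π (x : M) = x := Submodule.linearProjOfIsCompl_apply_left hcompl x
  have hkey2 : (0 : N) = f • π (Γ (x : M)) + (2 * X ^ 2 * derivative f) • x := by
    have := congrArg π hkey
    rwa [map_zero, map_add, map_smul, map_smul, hπx] at this
  have hkey3 : (0 : modpQuot p (lam : ℤ) d)
      = (2 * X ^ 2 * derivative f) • (1 : modpQuot p (lam : ℤ) d) := by
    have := congrArg e hkey2
    rw [map_zero, map_add, map_smul, map_smul, hfkill, zero_add, hxdef,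
      e.apply_symm_apply] at this
    exact this
  -- compute the image of 2X²f'
  have hmapg : (2 * X ^ 2 * derivative f).map (Int.castRingHom (ZMod p))
      = q ^ (d - 1) * (2 * X ^ 2 * C (d : ZMod p)) := by
    rw [hfdef, derivative_pow]
    simp only [derivative_sub, derivative_X, derivative_C, sub_zero, mul_one]
    rw [Polynomial.map_mul, Polynomial.map_mul, Polynomial.map_mul,
      Polynomial.map_pow, Polynomial.map_pow, Polynomial.map_sub]
    push_cast
    simp only [map_C, map_X, Polynomial.map_ofNat]
    rw [hqdef, hlzdef]
    simp only [Int.coe_castRingHom, Int.cast_natCast]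
    push_cast
    ring
  have hdvd : q ^ d ∣ q ^ (d - 1) * (2 * X ^ 2 * C (d : ZMod p)) := by
    have := hkey3
    rw [hsmul, mul_one, hmapg] at this
    rw [Ideal.mem_span_singleton.symm]
    exact Ideal.Quotient.eq_zero_iff_mem.mp this.symm
  have hlznz : lz ≠ 0 := by
    rw [hlzdef]
    push_cast
    rw [Ne, ZMod.natCast_eq_zero_iff]
    exact (Nat.Prime.coprime_iff_not_dvd hp).mp hlamp.symm
  have hqnz : q ≠ 0 := X_sub_C_ne_zero lz
  have hdvd2 : q ∣ 2 * X ^ 2 * C (d : ZMod p) := by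
    have hrw : q ^ d = q ^ (d - 1) * q := by
      rw [← pow_succ]; congr 1; omega
    rw [hrw] at hdvd
    exact (mul_dvd_mul_iff_left (pow_ne_zero _ hqnz)).mp hdvd
  have hroot : IsRoot (2 * X ^ 2 * C (d : ZMod p)) lz := dvd_iff_isRoot.mp hdvd2
  have h2nz : (2 : ZMod p) ≠ 0 := by
    have h2 : ((2 : ℕ) : ZMod p) ≠ 0 := by
      rw [Ne, ZMod.natCast_eq_zero_iff]
      exact fun h => hodd ((Nat.prime_dvd_prime_iff_eq hp Nat.prime_two).mp h)
    exact_mod_cast h2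
  have hdnz : (d : ZMod p) ≠ 0 := by
    rw [Ne, ZMod.natCast_eq_zero_iff]
    exact (Nat.Prime.coprime_iff_not_dvd hp).mp hdp.symm
  simp only [IsRoot, eval_mul, eval_pow, eval_X, eval_C, eval_ofNat] at hroot
  rcases mul_eq_zero.mp hroot with h | h
  · rcases mul_eq_zero.mp h with h' | h'
    · exact h2nz (by exact_mod_cast h')
    · exact hlznz (pow_eq_zero_iff (by norm_num) |>.mp h')
  · exact hdnz h
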